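/- Let n ≥ m ≥ 1 and k ≥ 2 be integers such that k − 1 is divisible by n + m + 1. If n is even or m is odd, then r(S(n,m); k) ≥ kn + m + 2. -/

import Mathlib

open SimpleGraph

/-- The double star `S(n,m)`: two adjacent centers `0` and `1`, with `n` leaves
attached to `0` (vertices `2,…,n+1`) and `m` leaves attached to `1`
(vertices `n+2,…,n+m+1`). -/
def doubleStar (n m : ℕ) : SimpleGraph (Fin (n + m + 2)) :=
  SimpleGraph.fromRel (fun u v =>
    (u.val = 0 ∧ v.val = 1) ∨
    (u.val = 0 ∧ 2 ≤ v.val ∧ v.val ≤ n + 1) ∨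
    (u.val = 1 ∧ n + 2 ≤ v.val))

/-- The star `K_{1,n}` with center `0` and `n` leaves. -/
def starGraph (n : ℕ) : SimpleGraph (Fin (n + 1)) :=
  SimpleGraph.fromRel (fun u _ => u.val = 0)

/-- The subdivided star `S_n^m`, obtained from `K_{1,n}` by subdividing `m` edges each
exactly once: center `0`; subdivision vertices `1,…,m`; for `1 ≤ i ≤ m` the vertex `m+i`
is the leaf beyond subdivision vertex `i`; vertices `2m+1,…,n+m` are ordinary leaves. -/
def subdividedStar (n m : ℕ) : SimpleGraph (Fin (n + m + 1)) :=
  SimpleGraph.fromRel (fun u v =>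
    (u.val = 0 ∧ 1 ≤ v.val ∧ v.val ≤ m) ∨
    (1 ≤ u.val ∧ u.val ≤ m ∧ v.val = u.val + m) ∨
    (u.val = 0 ∧ 2 * m + 1 ≤ v.val))

/-- `K_N` colored by `c` with `k` colors contains a monochromatic copy of `H`. -/
def HasMonoCopy {W : Type} (H : SimpleGraph W) {N : ℕ} {α : Type}
    (c : Sym2 (Fin N) → α) : Prop :=
  ∃ (f : W ↪ Fin N) (i : α), ∀ v w : W, H.Adj v w → c s(f v, f w) = i

/-- Every `k`-coloring of the edges of `K_N` contains a monochromatic copy of `H`. -/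
def IsRamsey {W : Type} (H : SimpleGraph W) (k N : ℕ) : Prop :=
  ∀ c : Sym2 (Fin N) → Fin k, HasMonoCopy H c

/-- The `k`-color Ramsey number of `H`. -/
noncomputable def ramseyNumber {W : Type} (H : SimpleGraph W) (k : ℕ) : ℕ :=
  sInf {N | IsRamsey H k N}

/-- There is a list assignment of `k` colors to each edge of `K_N` such that every
coloring from the lists contains a monochromatic copy of `H`. -/
def IsListRamsey {W : Type} (H : SimpleGraph W) (k N : ℕ) : Prop :=
  ∃ L : Sym2 (Fin N) → Finset ℕ, (∀ e, (L e).card = k) ∧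
    ∀ c : Sym2 (Fin N) → ℕ, (∀ e, c e ∈ L e) → HasMonoCopy H c

/-- The `k`-color list Ramsey number of `H`. -/
noncomputable def listRamseyNumber {W : Type} (H : SimpleGraph W) (k : ℕ) : ℕ :=
  sInf {N | IsListRamsey H k N}



-- adjacency helpers
lemma ds_adj_0 {n m : ℕ} (j : Fin (n + m + 2)) (h1 : 1 ≤ j.val) (h2 : j.val ≤ n + 1) :
    (doubleStar n m).Adj 0 j := by
  rw [doubleStar, SimpleGraph.fromRel_adj]
  refine ⟨?_, Or.inl ?_⟩
  · intro h
    have : (0 : Fin (n+m+2)).val = j.val := by rw [h]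
    simp at this
    omega
  · rcases Nat.eq_or_lt_of_le h1 with h | h
    · exact Or.inl ⟨by simp, h.symm⟩
    · exact Or.inr (Or.inl ⟨by simp, by omega, h2⟩)

lemma ds_adj_1 {n m : ℕ} (j : Fin (n + m + 2)) (h1 : n + 2 ≤ j.val) :
    (doubleStar n m).Adj 1 j := by
  rw [doubleStar, SimpleGraph.fromRel_adj]
  refine ⟨?_, Or.inl (Or.inr (Or.inr ⟨?_, h1⟩))⟩
  · intro h
    have : (1 : Fin (n+m+2)).val = j.val := by rw [h]
    rw [Fin.val_one] at this
    omega
  · exact Fin.val_one _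

/-- Master lemma: a coloring with per-color certificates gives non-Ramseyness. -/
lemma no_ramsey_master {V : Type} [Fintype V] [DecidableEq V] {n m k N : ℕ}
    (hm : 1 ≤ m) (hn : 1 ≤ n)
    (hcard : Fintype.card V = N)
    (col : V → V → ℕ) (hsymm : ∀ a b, col a b = col b a) (hbound : ∀ a b, col a b < k)
    (hcert : ∀ i : ℕ, i < k →
      (∃ g : V → ℕ, ∃ tf : V → Fin (n + m + 1),
         (∀ x y, x ≠ y → col x y = i → g x = g y) ∧
         (∀ x y, g x = g y → tf x = tf y → x = y)) ∨
      (∃ gf : V → V → Fin n,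
         ∀ x y₁ y₂, y₁ ≠ x → y₂ ≠ x → col x y₁ = i → col x y₂ = i →
           gf x y₁ = gf x y₂ → y₁ = y₂)) :
    ¬ IsRamsey (doubleStar n m) k N := by
  intro hR
  have e : V ≃ Fin N := Fintype.equivFinOfCardEq hcard
  set c : Sym2 (Fin N) → Fin k :=
    Sym2.lift ⟨fun a b => (⟨col (e.symm a) (e.symm b), hbound _ _⟩ : Fin k),
      fun a b => Fin.ext (hsymm _ _)⟩ with hc
  obtain ⟨f, i, hf⟩ := hR c
  set F : Fin (n + m + 2) → V := fun j => e.symm (f j) with hF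
  have hFinj : Function.Injective F := fun a b h => f.injective (e.symm.injective h)
  have hcol : ∀ v w, (doubleStar n m).Adj v w → col (F v) (F w) = i.val := by
    intro v w hadj
    have := hf v w hadj
    have : (c s(f v, f w)).val = i.val := by rw [this]
    simpa [hc, Sym2.lift_mk] using this
  rcases hcert i.val i.isLt with ⟨g, tf, h1, h2⟩ | ⟨gf, hinj⟩
  · -- clique certificate
    have hsame : ∀ j : Fin (n + m + 2), g (F j) = g (F 0) := by
      intro j
      rcases Nat.eq_zero_or_pos j.val with h0 | h0
      · have : j = 0 := by apply Fin.ext; simpa using h0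
        rw [this]
      rcases le_or_gt j.val (n + 1) with hle | hgt
      · have hadj := ds_adj_0 j h0 hle
        have := hcol 0 j hadj
        exact (h1 (F 0) (F j) (fun hh => (by
          have := hFinj hh
          have : (0 : Fin (n+m+2)).val = j.val := by rw [this]
          simp at this; omega)) this).symm
      · have hadj := ds_adj_1 j (by omega)
        have hc1 := hcol 1 j hadj
        have e1 : g (F 1) = g (F j) :=
          h1 (F 1) (F j) (fun hh => (by
            have := hFinj hh
            have : (1 : Fin (n+m+2)).val = j.val := by rw [this]
            rw [Fin.val_one] at this; omega)) hc1
        have e0 : g (F 0) = g (F 1) := by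
          have hadj01 : (doubleStar n m).Adj 0 1 := ds_adj_0 1 (by rw [Fin.val_one]) (by rw [Fin.val_one]; omega)
          exact h1 (F 0) (F 1) (fun hh => (by
            have := hFinj hh
            have : (0 : Fin (n+m+2)).val = (1 : Fin (n+m+2)).val := by rw [this]
            simp [Fin.val_one] at this)) (hcol 0 1 hadj01)
        rw [← e1, ← e0]
    have hinj2 : Function.Injective (fun j => tf (F j)) := by
      intro a b hab
      exact hFinj (h2 (F a) (F b) (by rw [hsame a, hsame b]) hab)
    have := Fintype.card_le_of_injective _ hinj2
    simp [Fintype.card_fin] at this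
  · -- star certificate
    have hinj2 : Function.Injective
        (fun j : Fin (n+1) => gf (F 0) (F ⟨j.val + 1, by omega⟩)) := by
      intro a b hab
      have hane : F ⟨a.val + 1, by omega⟩ ≠ F 0 := by
        intro hh
        have := hFinj hh
        have : (a.val + 1 : ℕ) = (0 : Fin (n+m+2)).val := congrArg Fin.val this
        simp at this
      have hbne : F ⟨b.val + 1, by omega⟩ ≠ F 0 := by
        intro hh
        have := hFinj hh
        have : (b.val + 1 : ℕ) = (0 : Fin (n+m+2)).val := congrArg Fin.val this
        simp at this
      have hca := hcol 0 ⟨a.val + 1, by omega⟩ (ds_adj_0 _ (by simp) (by simp; omega))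
      have hcb := hcol 0 ⟨b.val + 1, by omega⟩ (ds_adj_0 _ (by simp) (by simp; omega))
      have := hinj (F 0) _ _ hane hbne hca hcb hab
      have := hFinj this
      have : a.val + 1 = b.val + 1 := congrArg Fin.val this
      exact Fin.ext (by omega)
    have := Fintype.card_le_of_injective _ hinj2
    simp [Fintype.card_fin] at this

section Existence

variable {n m : ℕ}

/-- Build a monochromatic double star from two adjacent centers with large
monochromatic neighborhoods. -/
lemma build_copy {N : ℕ} {α : Type} (c : Sym2 (Fin N) → α) (i : α) (u v : Fin N)
    (huv : u ≠ v) (hcuv : c s(u, v) = i) (Su Sv : Finset (Fin N))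
    (hSu : ∀ w ∈ Su, w ≠ u ∧ c s(u, w) = i) (hSv : ∀ w ∈ Sv, w ≠ v ∧ c s(v, w) = i)
    (hcu : n + m + 1 ≤ Su.card) (hcv : n + m + 1 ≤ Sv.card) :
    ∃ f : Fin (n + m + 2) ↪ Fin N, ∀ a b, (doubleStar n m).Adj a b → c s(f a, f b) = i := by
  classical
  obtain ⟨Xv, hXvsub, hXvcard⟩ := Finset.exists_subset_card_eq
    (show m ≤ (Sv.erase u).card by
      have := Finset.pred_card_le_card_erase (a := u) (s := Sv); omega)
  obtain ⟨Xu, hXusub, hXucard⟩ := Finset.exists_subset_card_eq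
    (show n ≤ ((Su.erase v) \ Xv).card by
      have h1 := Finset.le_card_sdiff Xv (Su.erase v)
      have := Finset.pred_card_le_card_erase (a := v) (s := Su)
      have := Finset.card_le_card hXvsub
      have := Finset.card_erase_le (a := u) (s := Sv)
      omega)
  have hXuSu : ∀ w ∈ Xu, w ∈ Su ∧ w ≠ v ∧ w ∉ Xv := by
    intro w hw
    have h2 := hXusub hw
    have h3 := Finset.mem_sdiff.mp h2
    exact ⟨Finset.mem_of_mem_erase h3.1, Finset.ne_of_mem_erase h3.1, h3.2⟩
  have hXvSv : ∀ w ∈ Xv, w ∈ Sv ∧ w ≠ u := by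
    intro w hw
    have h2 := hXvsub hw
    exact ⟨Finset.mem_of_mem_erase h2, Finset.ne_of_mem_erase h2⟩
  set fu := Xu.orderEmbOfFin hXucard with hfu
  set fv := Xv.orderEmbOfFin hXvcard with hfv
  have hfumem : ∀ j, fu j ∈ Xu := fun j => Xu.orderEmbOfFin_mem hXucard j
  have hfvmem : ∀ j, fv j ∈ Xv := fun j => Xv.orderEmbOfFin_mem hXvcard j
  set f : Fin (n + m + 2) → Fin N := fun j =>
    if h0 : j.val = 0 then u else if h1 : j.val = 1 then v
    else if h2 : j.val < n + 2 then fu ⟨j.val - 2, by omega⟩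
    else fv ⟨j.val - (n + 2), by omega⟩ with hfdef
  -- basic membership facts
  have hfuprops : ∀ j, fu j ≠ u ∧ fu j ≠ v ∧ fu j ∉ Xv ∧ c s(u, fu j) = i := by
    intro j
    obtain ⟨h1, h2, h3⟩ := hXuSu _ (hfumem j)
    exact ⟨(hSu _ h1).1, h2, h3, (hSu _ h1).2⟩
  have hfvprops : ∀ j, fv j ≠ v ∧ fv j ≠ u ∧ c s(v, fv j) = i := by
    intro j
    obtain ⟨h1, h2⟩ := hXvSv _ (hfvmem j)
    exact ⟨(hSv _ h1).1, h2, (hSv _ h1).2⟩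
  have hdisj : ∀ (j1 : Fin n) (j2 : Fin m), fu j1 ≠ fv j2 := by
    intro j1 j2 hh
    apply (hfuprops j1).2.2.1
    rw [hh]
    exact hfvmem j2
  have hinj : Function.Injective f := by
    intro a b hab
    simp only [hfdef] at hab
    apply Fin.ext
    split_ifs at hab with g1 g2 g3 g4 g5 g6 g7 g8 g9 g10 g11 g12 g13 g14 g15 <;>
      first
        | omega
        | (exact absurd hab huv)
        | (exact absurd hab.symm huv)
        | (exact absurd hab.symm (hfuprops _).1)
        | (exact absurd hab (hfuprops _).1)
        | (exact absurd hab.symm (hfuprops _).2.1)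
        | (exact absurd hab (hfuprops _).2.1)
        | (exact absurd hab.symm (hfvprops _).2.1)
        | (exact absurd hab (hfvprops _).2.1)
        | (exact absurd hab.symm (hfvprops _).1)
        | (exact absurd hab (hfvprops _).1)
        | (exact absurd hab (hdisj _ _))
        | (exact absurd hab.symm (hdisj _ _))
        | (have h3 := fu.injective hab; rw [Fin.mk.injEq] at h3; omega)
        | (have h3 := fv.injective hab; rw [Fin.mk.injEq] at h3; omega)
  refine ⟨⟨f, hinj⟩, ?_⟩
  intro a b hadj
  rw [doubleStar, SimpleGraph.fromRel_adj] at hadj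
  obtain ⟨hne, hrel⟩ := hadj
  have key : ∀ x y : Fin (n + m + 2),
      ((x.val = 0 ∧ y.val = 1) ∨ (x.val = 0 ∧ 2 ≤ y.val ∧ y.val ≤ n + 1) ∨
        (x.val = 1 ∧ n + 2 ≤ y.val)) → c s(f x, f y) = i := by
    intro x y hxy
    rcases hxy with ⟨hx, hy⟩ | ⟨hx, hy1, hy2⟩ | ⟨hx, hy⟩
    · have hfx : f x = u := by simp only [hfdef]; rw [dif_pos hx]
      have hfy : f y = v := by
        simp only [hfdef]; rw [dif_neg (by omega), dif_pos hy]
      rw [hfx, hfy]; exact hcuv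
    · have hfx : f x = u := by simp only [hfdef]; rw [dif_pos hx]
      have hfy : f y = fu ⟨y.val - 2, by omega⟩ := by
        simp only [hfdef]; rw [dif_neg (by omega), dif_neg (by omega), dif_pos (by omega)]
      rw [hfx, hfy]; exact (hfuprops _).2.2.2
    · have hfx : f x = v := by simp only [hfdef]; rw [dif_neg (by omega), dif_pos hx]
      have hfy : f y = fv ⟨y.val - (n + 2), by omega⟩ := by
        simp only [hfdef]; rw [dif_neg (by omega), dif_neg (by omega), dif_neg (by omega)]
      rw [hfx, hfy]; exact (hfvprops _).2.2
  rcases hrel with h | h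
  · exact key a b h
  · rw [Sym2.eq_swap]; exact key b a h

end Existence

lemma exists_isRamsey (n m k : ℕ) (hk : 1 ≤ k) :
    IsRamsey (doubleStar n m) k (2 ^ k * (k * (n + m + 1) + 2)) := by
  classical
  set N0 := 2 ^ k * (k * (n + m + 1) + 2) with hN0
  intro c
  by_contra hno
  have key : ∀ j, j ≤ k → ∃ B : Finset (Fin N0),
      (∀ i : Fin k, i.val < j → ∀ v ∈ B,
        (B.filter (fun w => w ≠ v ∧ c s(v, w) = i)).card ≤ n + m) ∧
      N0 ≤ 2 ^ j * B.card := by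
    intro j
    induction j with
    | zero =>
      intro _
      refine ⟨Finset.univ, fun i hi => by omega, ?_⟩
      simp [Finset.card_univ]
    | succ j ih =>
      intro hj
      obtain ⟨B, hdead, hcard⟩ := ih (by omega)
      set i : Fin k := ⟨j, by omega⟩ with hi
      have hival : i.val = j := rfl
      by_cases hedge : ∃ u ∈ B, n + m + 1 ≤ (B.filter (fun w => w ≠ u ∧ c s(u, w) = i)).card ∧
          ∃ v ∈ B, (n + m + 1 ≤ (B.filter (fun w => w ≠ v ∧ c s(v, w) = i)).card ∧
            v ≠ u ∧ c s(u, v) = i)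
      · exfalso
        obtain ⟨u, hu, hdu, v, hv, hdv, hvu, hcuv⟩ := hedge
        obtain ⟨f, hf⟩ := build_copy c i u v (Ne.symm hvu) hcuv
          (B.filter (fun w => w ≠ u ∧ c s(u, w) = i))
          (B.filter (fun w => w ≠ v ∧ c s(v, w) = i))
          (fun w hw => (Finset.mem_filter.mp hw).2)
          (fun w hw => (Finset.mem_filter.mp hw).2) hdu hdv
        exact hno ⟨f, i, hf⟩
      · push_neg at hedge
        set H := B.filter
          (fun v => n + m + 1 ≤ (B.filter (fun w => w ≠ v ∧ c s(v, w) = i)).card) with hH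
        have hHB : H ⊆ B := Finset.filter_subset _ _
        have hnoedge : ∀ u ∈ H, ∀ v ∈ H, v ≠ u → c s(u, v) ≠ i := by
          intro u hu v hv hne
          have hu' := Finset.mem_filter.mp hu
          have hv' := Finset.mem_filter.mp hv
          exact fun hc => (hedge u hu'.1 hu'.2 v hv'.1 hv'.2 hne) hc
        by_cases hsize : B.card ≤ 2 * H.card
        · refine ⟨H, ?_, ?_⟩
          · intro i' hi' v hv
            rcases Nat.lt_or_ge i'.val j with hlt | hge
            · calc (H.filter (fun w => w ≠ v ∧ c s(v, w) = i')).card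
                  ≤ (B.filter (fun w => w ≠ v ∧ c s(v, w) = i')).card :=
                    Finset.card_le_card (Finset.filter_subset_filter _ hHB)
                _ ≤ n + m := hdead i' hlt v (hHB hv)
            · have : i' = i := Fin.ext (by omega)
              subst this
              have : (H.filter (fun w => w ≠ v ∧ c s(v, w) = i)) = ∅ := by
                apply Finset.eq_empty_iff_forall_notMem.mpr
                intro w hw
                obtain ⟨hwH, hwv, hwc⟩ := Finset.mem_filter.mp hw
                exact hnoedge v hv w hwH hwv hwc
              rw [this]
              simp
          · calc N0 ≤ 2 ^ j * B.card := hcard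
              _ ≤ 2 ^ j * (2 * H.card) := Nat.mul_le_mul_left _ hsize
              _ = 2 ^ (j + 1) * H.card := by ring
        · refine ⟨B \ H, ?_, ?_⟩
          · intro i' hi' v hv
            rcases Nat.lt_or_ge i'.val j with hlt | hge
            · calc ((B \ H).filter (fun w => w ≠ v ∧ c s(v, w) = i')).card
                  ≤ (B.filter (fun w => w ≠ v ∧ c s(v, w) = i')).card :=
                    Finset.card_le_card (Finset.filter_subset_filter _ (Finset.sdiff_subset))
                _ ≤ n + m := hdead i' hlt v ((Finset.sdiff_subset) hv)
            · have : i' = i := Fin.ext (by omega)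
              subst this
              obtain ⟨hvB, hvH⟩ := Finset.mem_sdiff.mp hv
              have hnot : ¬ (n + m + 1 ≤ (B.filter (fun w => w ≠ v ∧ c s(v, w) = i)).card) := by
                intro hcon
                exact hvH (Finset.mem_filter.mpr ⟨hvB, hcon⟩)
              have hle : (B.filter (fun w => w ≠ v ∧ c s(v, w) = i)).card ≤ n + m := by omega
              calc ((B \ H).filter (fun w => w ≠ v ∧ c s(v, w) = i)).card
                  ≤ (B.filter (fun w => w ≠ v ∧ c s(v, w) = i)).card :=
                    Finset.card_le_card (Finset.filter_subset_filter _ (Finset.sdiff_subset))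
                _ ≤ n + m := hle
          · have hcs : (B \ H).card = B.card - H.card := Finset.card_sdiff_of_subset hHB
            have hHle : H.card ≤ B.card := Finset.card_le_card hHB
            have h2 : B.card ≤ 2 * (B \ H).card := by omega
            calc N0 ≤ 2 ^ j * B.card := hcard
              _ ≤ 2 ^ j * (2 * (B \ H).card) := Nat.mul_le_mul_left _ h2
              _ = 2 ^ (j + 1) * (B \ H).card := by ring
  obtain ⟨B, hdead, hcard⟩ := key k le_rfl
  have hBcard : k * (n + m + 1) + 2 ≤ B.card := by
    have h2 : 0 < 2 ^ k := Nat.pow_pos (by omega)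
    exact Nat.le_of_mul_le_mul_left hcard h2
  obtain ⟨v, hv⟩ := Finset.card_pos.mp (show 0 < B.card by omega)
  have hsub : B.erase v ⊆ Finset.univ.biUnion
      (fun i : Fin k => B.filter (fun w => w ≠ v ∧ c s(v, w) = i)) := by
    intro w hw
    obtain ⟨hwv, hwB⟩ := Finset.mem_erase.mp hw
    exact Finset.mem_biUnion.mpr ⟨c s(v, w), Finset.mem_univ _,
      Finset.mem_filter.mpr ⟨hwB, hwv, rfl⟩⟩
  have hbound : (B.erase v).card ≤ k * (n + m) := by
    calc (B.erase v).card
        ≤ (Finset.univ.biUnion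
            (fun i : Fin k => B.filter (fun w => w ≠ v ∧ c s(v, w) = i))).card :=
          Finset.card_le_card hsub
      _ ≤ ∑ i : Fin k, (B.filter (fun w => w ≠ v ∧ c s(v, w) = i)).card :=
          Finset.card_biUnion_le
      _ ≤ ∑ _i : Fin k, (n + m) :=
          Finset.sum_le_sum (fun i _ => hdead i i.isLt v hv)
      _ = k * (n + m) := by simp [Finset.sum_const, mul_comm]
  have herase : (B.erase v).card = B.card - 1 := Finset.card_erase_of_mem hv
  have hkk : k * (n + m + 1) = k * (n + m) + k := by ring
  omega

-- ===== helpers for constructions =====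

lemma euclid_unique {c a a' b b' : ℕ} (hc : 0 < c) (h : a * c + b = a' * c + b')
    (hb : b < c) (hb' : b' < c) : a = a' ∧ b = b' := by
  have h1 : (a * c + b) / c = a := by
    rw [mul_comm, add_comm, Nat.add_mul_div_left _ _ hc, Nat.div_eq_of_lt hb]
    omega
  have h2 : (a' * c + b') / c = a' := by
    rw [mul_comm, add_comm, Nat.add_mul_div_left _ _ hc, Nat.div_eq_of_lt hb']
    omega
  have haa : a = a' := by rw [← h1, ← h2, h]
  subst haa
  exact ⟨rfl, by omega⟩

lemma rank_eq_of_col {n c0 i r1 r2 : ℕ} (hn : 0 < n) (h1 : c0 + r1 / n = i) (h2 : c0 + r2 / n = i)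
    (hmod : r1 % n = r2 % n) : r1 = r2 := by
  have hdiv : r1 / n = r2 / n := by omega
  have e1 := Nat.div_add_mod r1 n
  have e2 := Nat.div_add_mod r2 n
  rw [hdiv] at e1
  omega

-- ===== Case C : n odd, t odd (q = t*n+1 even) =====

def muC (q : ℕ) (x1 x2 : ZMod q) : ZMod (q - 1) :=
  if x1.val = q - 1 then 2 * (x2.val : ZMod (q - 1))
  else if x2.val = q - 1 then 2 * (x1.val : ZMod (q - 1))
  else (x1.val : ZMod (q - 1)) + (x2.val : ZMod (q - 1))

lemma muC_comm {q : ℕ} (hq2 : 2 ≤ q) (x1 x2 : ZMod q) : muC q x1 x2 = muC q x2 x1 := by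
  haveI : NeZero q := ⟨by omega⟩
  unfold muC
  by_cases h1 : x1.val = q - 1 <;> by_cases h2 : x2.val = q - 1
  · have hx : x1 = x2 := ZMod.val_injective q (by omega)
    rw [hx]
  · rw [if_pos h1, if_neg h2, if_pos h1]
  · rw [if_neg h1, if_pos h2, if_pos h2]
  · rw [if_neg h1, if_neg h2, if_neg h2, if_neg h1, add_comm]

lemma muC_inj {q : ℕ} (hq2 : 2 ≤ q) (hodd : Odd (q - 1)) (x a b : ZMod q)
    (ha : a ≠ x) (hb : b ≠ x) (h : muC q x a = muC q x b) : a = b := by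
  haveI : NeZero q := ⟨by omega⟩
  haveI : NeZero (q - 1) := ⟨by omega⟩
  have valinj : ∀ (u v : ZMod q), u.val = v.val → u = v := fun u v hh =>
    ZMod.val_injective q hh
  have hu2 : IsUnit (2 : ZMod (q - 1)) :=
    ⟨ZMod.unitOfCoprime 2 hodd.coprime_two_left, ZMod.coe_unitOfCoprime 2 hodd.coprime_two_left⟩
  have hcast : ∀ u : ZMod q, u ≠ x → x.val = q - 1 → u.val < q - 1 := by
    intro u hu hx
    have := ZMod.val_lt u
    rcases Nat.lt_or_ge u.val (q - 1) with h' | h'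
    · exact h'
    · exact absurd (valinj u x (by omega)) hu
  unfold muC at h
  by_cases hx : x.val = q - 1
  · rw [if_pos hx, if_pos hx] at h
    have h2 := hu2.mul_left_cancel h
    have hav := hcast a ha hx
    have hbv := hcast b hb hx
    apply valinj
    have := ZMod.val_cast_of_lt hav
    have := ZMod.val_cast_of_lt hbv
    rw [← ZMod.val_cast_of_lt hav, ← ZMod.val_cast_of_lt hbv, h2]
  · rw [if_neg hx, if_neg hx] at h
    have hxlt : x.val < q - 1 := by have := ZMod.val_lt x; omega
    by_cases hav : a.val = q - 1 <;> by_cases hbv : b.val = q - 1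
    · exact valinj a b (by omega)
    · rw [if_pos hav, if_neg hbv] at h
      exfalso
      have h2 : (x.val : ZMod (q - 1)) = (b.val : ZMod (q - 1)) := by
        have := h
        rw [two_mul] at this
        exact add_left_cancel this
      have hblt : b.val < q - 1 := by have := ZMod.val_lt b; omega
      apply hb
      apply valinj
      rw [← ZMod.val_cast_of_lt hblt, ← ZMod.val_cast_of_lt hxlt, h2]
    · rw [if_neg hav, if_pos hbv] at h
      exfalso
      have h2 : (x.val : ZMod (q - 1)) = (a.val : ZMod (q - 1)) := by
        have := h.symm
        rw [two_mul] at this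
        exact add_left_cancel this
      have halt : a.val < q - 1 := by have := ZMod.val_lt a; omega
      apply ha
      apply valinj
      rw [← ZMod.val_cast_of_lt halt, ← ZMod.val_cast_of_lt hxlt, h2]
    · rw [if_neg hav, if_neg hbv] at h
      have h2 := add_left_cancel h
      have halt : a.val < q - 1 := by have := ZMod.val_lt a; omega
      have hblt : b.val < q - 1 := by have := ZMod.val_lt b; omega
      apply valinj
      rw [← ZMod.val_cast_of_lt halt, ← ZMod.val_cast_of_lt hblt, h2]

def colC (q s n : ℕ) (u v : ZMod q × ZMod s) : ℕ :=
  if u.1 = v.1 then 0 else 1 + ((muC q u.1 v.1).val * s + (u.2 + v.2).val) / n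

lemma colC_symm {q : ℕ} (s n : ℕ) (hq2 : 2 ≤ q) (a b : ZMod q × ZMod s) :
    colC q s n a b = colC q s n b a := by
  unfold colC
  by_cases h : a.1 = b.1
  · rw [if_pos h, if_pos h.symm]
  · rw [if_neg h, if_neg (fun hh => h hh.symm), muC_comm hq2, add_comm a.2 b.2]


lemma caseC (n m t k : ℕ) (hm : 1 ≤ m) (hmn : m ≤ n) (ht : 1 ≤ t)
    (hq : Odd (t * n)) (hk : k = t * (n + m + 1) + 1) :
    ¬ IsRamsey (doubleStar n m) k (k * n + m + 1) := by
  set q := t * n + 1 with hqdef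
  set s := n + m + 1 with hsdef
  have hn1 : 1 ≤ n := le_trans hm hmn
  have htn : 1 ≤ t * n := Nat.mul_pos ht hn1
  have hq2 : 2 ≤ q := by omega
  have hw : q - 1 = t * n := by omega
  haveI : NeZero q := ⟨by omega⟩
  haveI : NeZero s := ⟨by omega⟩
  haveI : NeZero (q - 1) := ⟨by omega⟩
  have hqs : q * s = k * n + m + 1 := by
    rw [hqdef, hsdef, hk]; ring
  have hcard : Fintype.card (ZMod q × ZMod s) = k * n + m + 1 := by
    rw [Fintype.card_prod, ZMod.card, ZMod.card, hqs]
  -- bound on colC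
  have hbound : ∀ u v : ZMod q × ZMod s, colC q s n u v < k := by
    intro u v
    unfold colC
    split_ifs with h
    · omega
    · have h1 : (muC q u.1 v.1).val < q - 1 := by
        haveI : NeZero (q - 1) := ⟨by omega⟩
        exact ZMod.val_lt _
      have h2 : (u.2 + v.2).val < s := ZMod.val_lt _
      have hrk : (muC q u.1 v.1).val * s + (u.2 + v.2).val < (t * s) * n := by
        have e1 : (q - 1) * s = (t * s) * n := by rw [hw]; ring
        have e2 : (muC q u.1 v.1).val * s + s ≤ (q - 1) * s := by
          have := Nat.mul_le_mul_right s (show (muC q u.1 v.1).val + 1 ≤ q - 1 by omega)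
          calc (muC q u.1 v.1).val * s + s = ((muC q u.1 v.1).val + 1) * s := by ring
            _ ≤ (q - 1) * s := this
        omega
      have hdivlt : ((muC q u.1 v.1).val * s + (u.2 + v.2).val) / n < t * s :=
        (Nat.div_lt_iff_lt_mul (by omega)).mpr hrk
      have : k = t * s + 1 := by rw [hk, hsdef]
      omega
  apply no_ramsey_master hm hn1 hcard (colC q s n)
    (fun a b => colC_symm s n hq2 a b)
    hbound
  intro i hi
  rcases Nat.eq_zero_or_pos i with h0 | h1
  · -- clique certificate : columns
    left
    refine ⟨fun v => v.1.val, fun v => ⟨v.2.val, by have := ZMod.val_lt v.2; omega⟩, ?_, ?_⟩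
    · intro x y hxy hcol
      rw [h0] at hcol
      unfold colC at hcol
      split_ifs at hcol with h
      · exact congrArg ZMod.val h
      · simp at hcol
    · intro x y hg ht'
      have h2 : x.2.val = y.2.val := by
        have := congrArg Fin.val ht'
        simpa using this
      have hx1 : x.1 = y.1 := ZMod.val_injective q hg
      have hx2 : x.2 = y.2 := ZMod.val_injective s h2
      exact Prod.ext hx1 hx2
  · -- star certificate
    right
    refine ⟨fun x y => ⟨((muC q x.1 y.1).val * s + (x.2 + y.2).val) % n,
      Nat.mod_lt _ (by omega)⟩, ?_⟩
    intro x y₁ y₂ hy1 hy2 hc1 hc2 hgf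
    have hmod : ((muC q x.1 y₁.1).val * s + (x.2 + y₁.2).val) % n
        = ((muC q x.1 y₂.1).val * s + (x.2 + y₂.2).val) % n := by
      have := congrArg Fin.val hgf
      simpa using this
    unfold colC at hc1 hc2
    split_ifs at hc1 with hcond1
    · omega
    split_ifs at hc2 with hcond2
    · omega
    have hrk : (muC q x.1 y₁.1).val * s + (x.2 + y₁.2).val
        = (muC q x.1 y₂.1).val * s + (x.2 + y₂.2).val :=
      rank_eq_of_col (by omega) hc1 hc2 hmod
    obtain ⟨hμ, hσ⟩ := euclid_unique (show 0 < s by omega) hrk (ZMod.val_lt _) (ZMod.val_lt _)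
    have hy1' : y₁.1 = y₂.1 := by
      apply muC_inj hq2 (by rw [hw]; exact hq) x.1
      · intro hh; exact hcond1 hh.symm
      · intro hh; exact hcond2 hh.symm
      · exact ZMod.val_injective _ hμ
    have hy2' : y₁.2 = y₂.2 := by
      have := ZMod.val_injective s hσ
      exact add_left_cancel this
    exact Prod.ext hy1' hy2'

-- ===== Case A : n even =====

lemma div_add_le (q x y : ℕ) (hq : 0 < q) : (x + y) / q ≤ x / q + y := by
  calc (x + y) / q ≤ (x + q * y) / q :=
        Nat.div_le_div_right (by have : y ≤ q * y := Nat.le_mul_of_pos_left y hq; omega)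
    _ = x / q + y := Nat.add_mul_div_left _ _ hq

lemma cnt_mono {q e f : ℕ} (hq : 0 < q) (hef : e ≤ f) : e - e / q ≤ f - f / q := by
  have h1 : f / q ≤ e / q + (f - e) := by
    calc f / q = (e + (f - e)) / q := by congr 1; omega
      _ ≤ e / q + (f - e) := div_add_le _ _ _ hq
  have h2 : e / q ≤ e := Nat.div_le_self _ _
  have h3 : f / q ≤ f := Nat.div_le_self _ _
  omega

lemma cnt_lt {q e f : ℕ} (hq : 0 < q) (hef : e < f) (hnd : ¬ q ∣ f) : e - e / q < f - f / q := by
  have h1 : e - e / q ≤ (f - 1) - (f - 1) / q := cnt_mono hq (by omega)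
  have hmod : f % q ≠ 0 := fun hh => hnd (Nat.dvd_of_mod_eq_zero hh)
  have hdm := Nat.div_add_mod f q
  have hlt : f % q < q := Nat.mod_lt _ hq
  have h2 : (f - 1) / q = f / q := by
    have heq : f - 1 = (f % q - 1) + q * (f / q) := by omega
    rw [heq, Nat.add_mul_div_left _ _ hq, Nat.div_eq_of_lt (by omega)]
    omega
  have h3 : (f - 1) / q ≤ f - 1 := Nat.div_le_self _ _
  omega

def colA (N q h : ℕ) (a b : ZMod N) : ℕ :=
  if (min (a - b).val (b - a).val) % q = 0 then 0
  else 1 + ((min (a - b).val (b - a).val) - (min (a - b).val (b - a).val) / q - 1) / h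

lemma colA_symm (N q h : ℕ) (a b : ZMod N) : colA N q h a b = colA N q h b a := by
  unfold colA
  rw [min_comm]

lemma caseA (n m t k : ℕ) (hm : 1 ≤ m) (hmn : m ≤ n) (hn : Even n) (ht : 1 ≤ t)
    (hk : k = t * (n + m + 1) + 1) : ¬ IsRamsey (doubleStar n m) k (k * n + m + 1) := by
  obtain ⟨h, hh⟩ := hn
  have hh2 : n = 2 * h := by omega
  set s := n + m + 1 with hsdef
  set q := t * n + 1 with hqdef
  set N := k * n + m + 1 with hNdef
  have hn1 : 1 ≤ n := le_trans hm hmn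
  have hh1 : 1 ≤ h := by omega
  have htn : 1 ≤ t * n := Nat.mul_pos ht hn1
  have hq2 : 2 ≤ q := by
    have : 2 ≤ t * n := by
      have := Nat.mul_le_mul ht (show 2 ≤ n by omega)
      omega
    omega
  have hq0 : 0 < q := by omega
  have hNqs : N = q * s := by rw [hNdef, hqdef, hsdef, hk]; ring
  have hN1 : 1 ≤ N := by omega
  haveI : NeZero N := ⟨by omega⟩
  have hqN : q ∣ N := ⟨s, hNqs⟩
  have hcard : Fintype.card (ZMod N) = k * n + m + 1 := by rw [ZMod.card]
  -- count at midpoint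
  have hts1 : 1 ≤ t * s := Nat.mul_pos ht (by omega)
  have hcntM : N / 2 - (N / 2) / q = t * s * h := by
    rcases Nat.even_or_odd s with ⟨σ, hσ⟩ | ⟨σ, hσ⟩
    · -- s even
      have hs' : s = 2 * σ := by omega
      have heqN : N = 2 * (q * σ) := by rw [hNqs, hs']; ring
      have hM : N / 2 = q * σ := by omega
      have hMq : (q * σ) / q = σ := Nat.mul_div_cancel_left σ hq0
      have hqσ : q * σ = 2 * (t * h) * σ + σ := by
        have hq' : q = 2 * (t * h) + 1 := by rw [hqdef, hh2]; ring
        rw [hq']; ring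
      have hts : t * s * h = 2 * (t * h) * σ := by rw [hs']; ring
      rw [hM, hMq]
      omega
    · -- s odd ; q odd since n even
      have hρ : q = 2 * (t * h) + 1 := by rw [hqdef, hh2]; ring
      set ρ := t * h with hρdef
      have heqN : N = 2 * (2 * ρ * σ + ρ + σ) + 1 := by
        rw [hNqs, hρ, hσ]; ring
      have hM : N / 2 = 2 * ρ * σ + ρ + σ := by omega
      have hqσ : q * σ = 2 * ρ * σ + σ := by rw [hρ]; ring
      have hMsplit : N / 2 = ρ + q * σ := by omega
      have hMq : (N / 2) / q = σ := by
        rw [hMsplit, Nat.add_mul_div_left _ _ hq0, Nat.div_eq_of_lt (by omega)]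
        omega
      have hts : t * s * h = 2 * ρ * σ + ρ := by rw [hσ, hρdef]; ring
      rw [hMq]
      omega
  -- basic difference facts
  have hsum : ∀ a b : ZMod N, a ≠ b → (a - b).val + (b - a).val = N := by
    intro a b hab
    have hne : a - b ≠ 0 := sub_ne_zero.mpr hab
    have : b - a = -(a - b) := by ring
    rw [this, ZMod.neg_val, if_neg hne]
    have := ZMod.val_lt (a - b)
    omega
  -- bound
  have hbound : ∀ a b : ZMod N, colA N q h a b < k := by
    intro a b
    unfold colA
    split_ifs with hc
    · omega
    · set d := min (a - b).val (b - a).val with hd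
      have hd1 : 1 ≤ d := by
        rcases Nat.eq_zero_or_pos d with h0 | h1
        · rw [h0] at hc; simp at hc
        · exact h1
      have hab : a ≠ b := by
        intro hh
        have hz : d = 0 := by rw [hd, hh, sub_self]; simp
        omega
      have hdM : d ≤ N / 2 := by
        have := hsum a b hab
        omega
      have hcnt : d - d / q ≤ t * s * h := by
        rw [← hcntM]; exact cnt_mono hq0 hdM
      have hdq : d / q < d := Nat.div_lt_self (by omega) (by omega)
      have hrank : d - d / q - 1 < t * s * h := by omega
      have hdiv : (d - d / q - 1) / h < t * s := (Nat.div_lt_iff_lt_mul hh1).mpr hrank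
      have hkk : k = t * s + 1 := by rw [hk, hsdef]
      omega
  apply no_ramsey_master hm hn1 hcard (colA N q h) (colA_symm N q h) hbound
  intro i hi
  rcases Nat.eq_zero_or_pos i with h0 | h1
  · -- clique certificate: residues mod q
    left
    refine ⟨fun v => v.val % q, fun v => ⟨v.val / q, ?_⟩, ?_, ?_⟩
    · have hv := ZMod.val_lt v
      have : v.val < s * q := by rw [mul_comm, ← hNqs]; exact hv
      have := (Nat.div_lt_iff_lt_mul hq0).mpr this
      omega
    · intro x y hxy hcol
      rw [h0] at hcol
      unfold colA at hcol
      split_ifs at hcol with hcond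
      swap
      · simp at hcol
      -- q divides (x - y).val
      have hdvd : q ∣ (x - y).val := by
        rcases le_total (x - y).val (y - x).val with hle | hle
        · rw [min_eq_left hle] at hcond
          exact Nat.dvd_of_mod_eq_zero hcond
        · rw [min_eq_right hle] at hcond
          have h1 : q ∣ (y - x).val := Nat.dvd_of_mod_eq_zero hcond
          have h2 := hsum x y hxy
          have h3 : (x - y).val = N - (y - x).val := by omega
          rw [h3]
          exact Nat.dvd_sub hqN h1
      obtain ⟨c, hc⟩ := hdvd
      have hx : y + (x - y) = x := by ring
      have hval : x.val = (y.val + (x - y).val) % N := by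
        conv_lhs => rw [← hx]
        rw [ZMod.val_add]
      calc x.val % q = (y.val + (x - y).val) % N % q := by rw [hval]
        _ = (y.val + (x - y).val) % q := Nat.mod_mod_of_dvd _ hqN
        _ = (y.val + q * c) % q := by rw [hc]
        _ = y.val % q := Nat.add_mul_mod_self_left _ _ _
    · intro x y hg htf
      have h2 : x.val / q = y.val / q := by
        have := congrArg Fin.val htf
        simpa using this
      have e1 := Nat.div_add_mod x.val q
      have e2 := Nat.div_add_mod y.val q
      apply ZMod.val_injective
      have hg' : x.val % q = y.val % q := hg
      rw [← e1, ← e2, h2, hg']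
  · -- star certificate
    right
    refine ⟨fun x y => ⟨2 * (((min (x - y).val (y - x).val) -
        (min (x - y).val (y - x).val) / q - 1) % h) +
        (if (x - y).val ≤ (y - x).val then 0 else 1), ?_⟩, ?_⟩
    · have := Nat.mod_lt ((min (x - y).val (y - x).val) -
        (min (x - y).val (y - x).val) / q - 1) (y := h) (by omega)
      split_ifs <;> omega
    intro x y₁ y₂ hy1 hy2 hc1 hc2 hgf
    simp only [Fin.mk.injEq] at hgf
    unfold colA at hc1 hc2
    split_ifs at hc1 with hcond1
    · omega
    split_ifs at hc2 with hcond2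
    · omega
    set d1 := min (x - y₁).val (y₁ - x).val with hd1
    set d2 := min (x - y₂).val (y₂ - x).val with hd2
    have hnd1 : ¬ q ∣ d1 := by
      intro hdv
      obtain ⟨c, hc⟩ := hdv
      apply hcond1
      rw [hc, Nat.mul_mod_right]
    have hnd2 : ¬ q ∣ d2 := by
      intro hdv
      obtain ⟨c, hc⟩ := hdv
      apply hcond2
      rw [hc, Nat.mul_mod_right]
    have hd11 : 1 ≤ d1 := by
      rcases Nat.eq_zero_or_pos d1 with h0 | hp
      · rw [h0] at hcond1; simp at hcond1
      · exact hp
    have hd21 : 1 ≤ d2 := by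
      rcases Nat.eq_zero_or_pos d2 with h0 | hp
      · rw [h0] at hcond2; simp at hcond2
      · exact hp
    have hdq1 : d1 / q < d1 := Nat.div_lt_self (by omega) (by omega)
    have hdq2 : d2 / q < d2 := Nat.div_lt_self (by omega) (by omega)
    have hmodeq : (d1 - d1 / q - 1) % h = (d2 - d2 / q - 1) % h ∧
        ((x - y₁).val ≤ (y₁ - x).val ↔ (x - y₂).val ≤ (y₂ - x).val) := by
      by_cases c1 : (x - y₁).val ≤ (y₁ - x).val <;>
        by_cases c2 : (x - y₂).val ≤ (y₂ - x).val
      · rw [if_pos c1, if_pos c2] at hgf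
        exact ⟨by omega, by tauto⟩
      · rw [if_pos c1, if_neg c2] at hgf
        exact absurd hgf (by omega)
      · rw [if_neg c1, if_pos c2] at hgf
        exact absurd hgf (by omega)
      · rw [if_neg c1, if_neg c2] at hgf
        exact ⟨by omega, by tauto⟩
    obtain ⟨hmod, hiff⟩ := hmodeq
    have hrank : d1 - d1 / q - 1 = d2 - d2 / q - 1 := rank_eq_of_col hh1 hc1 hc2 hmod
    have hdd : d1 = d2 := by
      rcases lt_trichotomy d1 d2 with hl | he | hl
      · have := cnt_lt hq0 hl hnd2; omega
      · exact he
      · have := cnt_lt hq0 hl hnd1; omega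
    by_cases c1 : (x - y₁).val ≤ (y₁ - x).val
    · have c2 := hiff.mp c1
      have e1 : (x - y₁).val = d1 := (min_eq_left c1).symm
      have e2 : (x - y₂).val = d2 := (min_eq_left c2).symm
      have hsub : x - y₁ = x - y₂ := ZMod.val_injective N (by omega)
      exact sub_right_injective hsub
    · have c2 : ¬ (x - y₂).val ≤ (y₂ - x).val := fun hh => c1 (hiff.mpr hh)
      have e1 : (y₁ - x).val = d1 := (min_eq_right (le_of_lt (not_le.mp c1))).symm
      have e2 : (y₂ - x).val = d2 := (min_eq_right (le_of_lt (not_le.mp c2))).symm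
      have hsub : y₁ - x = y₂ - x := ZMod.val_injective N (by omega)
      have := congrArg (fun z => z + x) hsub
      simpa using this

-- ===== Case B : t even (q = t*n+1 odd), t ≥ 2 =====

def Ylift (q s : ℕ) (y : ZMod s) : ZMod q := (y.val : ZMod q)

def jraw (q : ℕ) (d δ : ZMod q) : ℕ := d.val - 1 - (if δ.val < d.val then 1 else 0)

def Jfun (q : ℕ) (d δ : ZMod q) : ℕ :=
  if 2 * δ.val ≤ q - 1 then jraw q d δ else jraw q (-d) (-δ)

lemma jraw_le {q : ℕ} (hq2 : 2 ≤ q) (d δ : ZMod q) (hd0 : d ≠ 0) (hdδ : d ≠ δ)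
    (hδ : δ ≠ 0) : jraw q d δ ≤ q - 3 := by
  haveI : NeZero q := ⟨by omega⟩
  have hdv : d.val ≠ 0 := fun hh => hd0 (by rwa [← ZMod.val_eq_zero])
  have hδv : δ.val ≠ 0 := fun hh => hδ (by rwa [← ZMod.val_eq_zero])
  have hne : d.val ≠ δ.val := fun hh => hdδ (ZMod.val_injective q hh)
  have h1 := ZMod.val_lt d
  have h2 := ZMod.val_lt δ
  unfold jraw
  split_ifs with hlt <;> omega

lemma jraw_inj {q : ℕ} (hq2 : 2 ≤ q) (δ d1 d2 : ZMod q) (hδ : δ ≠ 0)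
    (h10 : d1 ≠ 0) (h1δ : d1 ≠ δ) (h20 : d2 ≠ 0) (h2δ : d2 ≠ δ)
    (h : jraw q d1 δ = jraw q d2 δ) : d1 = d2 := by
  haveI : NeZero q := ⟨by omega⟩
  have hdv1 : d1.val ≠ 0 := fun hh => h10 (by rwa [← ZMod.val_eq_zero])
  have hdv2 : d2.val ≠ 0 := fun hh => h20 (by rwa [← ZMod.val_eq_zero])
  have hδv : δ.val ≠ 0 := fun hh => hδ (by rwa [← ZMod.val_eq_zero])
  have hne1 : d1.val ≠ δ.val := fun hh => h1δ (ZMod.val_injective q hh)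
  have hne2 : d2.val ≠ δ.val := fun hh => h2δ (ZMod.val_injective q hh)
  have h1 := ZMod.val_lt d1
  have h2 := ZMod.val_lt d2
  apply ZMod.val_injective
  unfold jraw at h
  split_ifs at h with a b b <;> omega

lemma Jfun_flip {q : ℕ} (hq2 : 2 ≤ q) (hodd : Odd q) (d δ : ZMod q) (hδ : δ ≠ 0) :
    Jfun q (-d) (-δ) = Jfun q d δ := by
  haveI : NeZero q := ⟨by omega⟩
  have hδv : (-δ).val = q - δ.val := by rw [ZMod.neg_val, if_neg hδ]
  have hδ1 : 1 ≤ δ.val := by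
    rcases Nat.eq_zero_or_pos δ.val with h0 | hp
    · exact absurd (by rwa [← ZMod.val_eq_zero]) hδ
    · exact hp
  have hδlt := ZMod.val_lt δ
  obtain ⟨r, hr⟩ := hodd
  unfold Jfun
  by_cases hcond : 2 * δ.val ≤ q - 1
  · rw [if_pos hcond, if_neg (by omega), neg_neg, neg_neg]
  · rw [if_neg hcond, if_pos (by omega)]

lemma Jfun_le {q : ℕ} (hq2 : 2 ≤ q) (d δ : ZMod q) (hd0 : d ≠ 0) (hdδ : d ≠ δ)
    (hδ : δ ≠ 0) : Jfun q d δ ≤ q - 3 := by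
  unfold Jfun
  split_ifs
  · exact jraw_le hq2 d δ hd0 hdδ hδ
  · exact jraw_le hq2 (-d) (-δ) (neg_ne_zero.mpr hd0)
      (fun hh => hdδ (neg_injective hh)) (neg_ne_zero.mpr hδ)

lemma Jfun_inj {q : ℕ} (hq2 : 2 ≤ q) (δ d1 d2 : ZMod q) (hδ : δ ≠ 0)
    (h10 : d1 ≠ 0) (h1δ : d1 ≠ δ) (h20 : d2 ≠ 0) (h2δ : d2 ≠ δ)
    (h : Jfun q d1 δ = Jfun q d2 δ) : d1 = d2 := by
  unfold Jfun at h
  split_ifs at h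
  · exact jraw_inj hq2 δ d1 d2 hδ h10 h1δ h20 h2δ h
  · exact neg_injective (jraw_inj hq2 (-δ) (-d1) (-d2) (neg_ne_zero.mpr hδ)
      (neg_ne_zero.mpr h10) (fun hh => h1δ (neg_injective hh))
      (neg_ne_zero.mpr h20) (fun hh => h2δ (neg_injective hh)) h)

def rankB (q s : ℕ) (u v : ZMod q × ZMod s) : ℕ :=
  if u.2 = v.2 then
    (if (u.1 + v.1).val = 0 then s * (q - 2)
     else if (u.1 + v.1).val = q - 1 then s * (q - 2) + 1
     else (u.2 + v.2).val * (q - 2) + ((u.1 + v.1).val - 1))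
  else (u.2 + v.2).val * (q - 2) + Jfun q (u.1 - v.1) (Ylift q s u.2 - Ylift q s v.2)

def colB (q s n : ℕ) (u v : ZMod q × ZMod s) : ℕ :=
  if u.1 = v.1 then 0
  else if u.1 - Ylift q s u.2 = v.1 - Ylift q s v.2 then 1
  else 2 + (rankB q s u v) / n

lemma rankB_symm {q s : ℕ} (hq2 : 2 ≤ q) (hodd : Odd q) (hsq : s ≤ q) (hs : 1 ≤ s)
    (u v : ZMod q × ZMod s) (huv : u.2 ≠ v.2 → Ylift q s u.2 - Ylift q s v.2 ≠ 0) :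
    rankB q s u v = rankB q s v u := by
  unfold rankB
  by_cases h : u.2 = v.2
  · rw [if_pos h, if_pos h.symm, add_comm u.1 v.1, add_comm u.2 v.2]
  · rw [if_neg h, if_neg (fun hh => h hh.symm), add_comm u.2 v.2]
    congr 1
    have e1 : v.1 - u.1 = -(u.1 - v.1) := by ring
    have e2 : Ylift q s v.2 - Ylift q s u.2 = -(Ylift q s u.2 - Ylift q s v.2) := by ring
    rw [e1, e2, Jfun_flip hq2 hodd _ _ (huv h)]

lemma colB_symm {q s n : ℕ} (hq2 : 2 ≤ q) (hodd : Odd q) (hsq : s ≤ q) (hs : 0 < s)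
    (a b : ZMod q × ZMod s) : colB q s n a b = colB q s n b a := by
  haveI : NeZero q := ⟨by omega⟩
  haveI : NeZero s := ⟨by omega⟩
  have hY : ∀ y1 y2 : ZMod s, Ylift q s y1 = Ylift q s y2 → y1 = y2 := by
    intro y1 y2 hh
    have l1 : y1.val < q := lt_of_lt_of_le (ZMod.val_lt y1) hsq
    have l2 : y2.val < q := lt_of_lt_of_le (ZMod.val_lt y2) hsq
    apply ZMod.val_injective
    unfold Ylift at hh
    rw [← ZMod.val_cast_of_lt l1, ← ZMod.val_cast_of_lt l2, hh]
  unfold colB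
  by_cases h1 : a.1 = b.1
  · rw [if_pos h1, if_pos (show b.1 = a.1 from h1.symm)]
  · rw [if_neg h1, if_neg (show ¬ b.1 = a.1 from fun hh => h1 hh.symm)]
    by_cases h2 : a.1 - Ylift q s a.2 = b.1 - Ylift q s b.2
    · rw [if_pos h2,
        if_pos (show b.1 - Ylift q s b.2 = a.1 - Ylift q s a.2 from h2.symm)]
    · rw [if_neg h2,
        if_neg (show ¬ b.1 - Ylift q s b.2 = a.1 - Ylift q s a.2 from fun hh => h2 hh.symm)]
      rw [rankB_symm hq2 hodd hsq hs a b]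
      intro hne
      exact sub_ne_zero.mpr (fun hh => hne (hY _ _ hh))

lemma caseB (n m t k : ℕ) (hm : 1 ≤ m) (hmn : m ≤ n) (ht : 2 ≤ t)
    (hq : Even (t * n)) (hk : k = t * (n + m + 1) + 1) :
    ¬ IsRamsey (doubleStar n m) k (k * n + m + 1) := by
  set s := n + m + 1 with hsdef
  set q := t * n + 1 with hqdef
  have hn1 : 1 ≤ n := le_trans hm hmn
  have htn : 2 * n ≤ t * n := Nat.mul_le_mul_right n ht
  have hq2 : 2 ≤ q := by omega
  have hq0 : 0 < q := by omega
  have hsq : s ≤ q := by omega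
  have hqodd : Odd q := by
    obtain ⟨r, hr⟩ := hq
    exact ⟨r, by omega⟩
  haveI : NeZero q := ⟨by omega⟩
  haveI : NeZero s := ⟨by omega⟩
  have hqs : q * s = k * n + m + 1 := by rw [hqdef, hsdef, hk]; ring
  have hcard : Fintype.card (ZMod q × ZMod s) = k * n + m + 1 := by
    rw [Fintype.card_prod, ZMod.card, ZMod.card, hqs]
  have hkk : k = t * s + 1 := by rw [hk, hsdef]
  -- product identities
  have hA : s * (q - 2) + 2 * s = t * s * n + s := by
    have h1 : q - 2 + 2 = q := by omega
    have h2 : s * (q - 2) + 2 * s = s * ((q - 2) + 2) := by ring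
    have h3 : s * q = t * s * n + s := by rw [hqdef]; ring
    rw [h2, h1, h3]
  have hB : (t * s - 1) * n + n = t * s * n := by
    have h1 : 1 ≤ t * s := Nat.mul_pos (by omega) (by omega)
    have h2 : (t * s - 1) + 1 = t * s := by omega
    calc (t * s - 1) * n + n = ((t * s - 1) + 1) * n := by ring
      _ = t * s * n := by rw [h2]
  -- injectivity of Ylift
  have hY : ∀ y1 y2 : ZMod s, Ylift q s y1 = Ylift q s y2 → y1 = y2 := by
    intro y1 y2 hh
    have l1 : y1.val < q := lt_of_lt_of_le (ZMod.val_lt y1) hsq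
    have l2 : y2.val < q := lt_of_lt_of_le (ZMod.val_lt y2) hsq
    apply ZMod.val_injective
    unfold Ylift at hh
    rw [← ZMod.val_cast_of_lt l1, ← ZMod.val_cast_of_lt l2, hh]
  -- global bound on rankB
  have hrank_le : ∀ u v : ZMod q × ZMod s, rankB q s u v ≤ s * (q - 2) + 1 := by
    intro u v
    unfold rankB
    have hβ : (u.2 + v.2).val ≤ s - 1 := by have := ZMod.val_lt (u.2 + v.2); omega
    have hmul : (u.2 + v.2).val * (q - 2) + (q - 2) ≤ s * (q - 2) := by
      calc (u.2 + v.2).val * (q - 2) + (q - 2) = ((u.2 + v.2).val + 1) * (q - 2) := by ring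
        _ ≤ s * (q - 2) := Nat.mul_le_mul_right _ (by omega)
    split_ifs with h1 h2 h3
    · omega
    · omega
    · have hγ := ZMod.val_lt (u.1 + v.1)
      omega
    · -- inter : jraw crude bound
      have hJ : Jfun q (u.1 - v.1) (Ylift q s u.2 - Ylift q s v.2) ≤ q - 2 := by
        unfold Jfun jraw
        have l1 := ZMod.val_lt (u.1 - v.1)
        have l2 := ZMod.val_lt (-(u.1 - v.1))
        split_ifs <;> omega
      omega
  have hts1 : 1 ≤ t * s := Nat.mul_pos (by omega) (by omega)
  have hbound : ∀ u v : ZMod q × ZMod s, colB q s n u v < k := by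
    intro u v
    unfold colB
    split_ifs with h1 h2
    · omega
    · omega
    · have hr := hrank_le u v
      have hlt : rankB q s u v < (t * s - 1) * n := by omega
      have := (Nat.div_lt_iff_lt_mul (show 0 < n by omega)).mpr hlt
      omega
  apply no_ramsey_master hm hn1 hcard (colB q s n)
    (colB_symm hq2 hqodd hsq (by omega)) hbound
  intro i hi
  rcases Nat.eq_zero_or_pos i with h0 | h1
  · -- columns
    left
    refine ⟨fun v => v.1.val, fun v => ⟨v.2.val, by have := ZMod.val_lt v.2; omega⟩, ?_, ?_⟩
    · intro x y hxy hcol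
      rw [h0] at hcol
      unfold colB at hcol
      by_cases ha : x.1 = y.1
      · exact congrArg ZMod.val ha
      · exfalso
        rw [if_neg ha] at hcol
        by_cases hb : x.1 - Ylift q s x.2 = y.1 - Ylift q s y.2
        · rw [if_pos hb] at hcol; omega
        · rw [if_neg hb] at hcol
          generalize rankB q s x y / n = R at hcol
          omega
    · intro x y hg htf
      have h2 : x.2.val = y.2.val := by
        have := congrArg Fin.val htf
        simpa using this
      exact Prod.ext (ZMod.val_injective q hg) (ZMod.val_injective s h2)
  rcases Nat.eq_or_lt_of_le h1 with h1' | h2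
  · -- lines
    left
    refine ⟨fun v => (v.1 - Ylift q s v.2).val,
      fun v => ⟨v.2.val, by have := ZMod.val_lt v.2; omega⟩, ?_, ?_⟩
    · intro x y hxy hcol
      rw [← h1'] at hcol
      unfold colB at hcol
      by_cases ha : x.1 = y.1
      · rw [if_pos ha] at hcol; omega
      · rw [if_neg ha] at hcol
        by_cases hb : x.1 - Ylift q s x.2 = y.1 - Ylift q s y.2
        · exact congrArg ZMod.val hb
        · exfalso
          rw [if_neg hb] at hcol
          generalize rankB q s x y / n = R at hcol
          omega
    · intro x y hg htf
      have h2 : x.2 = y.2 := by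
        apply ZMod.val_injective
        have := congrArg Fin.val htf
        simpa using this
      have h3 : x.1 - Ylift q s x.2 = y.1 - Ylift q s y.2 := ZMod.val_injective q hg
      rw [h2] at h3
      have h4 : x.1 = y.1 := by
        have := congrArg (fun z => z + Ylift q s y.2) h3
        simpa using this
      exact Prod.ext h4 h2
  · -- pieces
    right
    refine ⟨fun x y => ⟨rankB q s x y % n, Nat.mod_lt _ (by omega)⟩, ?_⟩
    intro x y₁ y₂ hy1 hy2 hc1 hc2 hgf
    simp only [Fin.mk.injEq] at hgf
    unfold colB at hc1 hc2
    by_cases ha1 : x.1 = y₁.1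
    · rw [if_pos ha1] at hc1; omega
    rw [if_neg ha1] at hc1
    by_cases hb1 : x.1 - Ylift q s x.2 = y₁.1 - Ylift q s y₁.2
    · rw [if_pos hb1] at hc1; omega
    rw [if_neg hb1] at hc1
    by_cases ha2 : x.1 = y₂.1
    · rw [if_pos ha2] at hc2; omega
    rw [if_neg ha2] at hc2
    by_cases hb2 : x.1 - Ylift q s x.2 = y₂.1 - Ylift q s y₂.2
    · rw [if_pos hb2] at hc2; omega
    rw [if_neg hb2] at hc2
    have hrk : rankB q s x y₁ = rankB q s x y₂ :=
      rank_eq_of_col (show 0 < n by omega) hc1 hc2 hgf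
    -- basic non-degeneracy facts
    have hd1 : x.1 - y₁.1 ≠ 0 := sub_ne_zero.mpr ha1
    have hd2 : x.1 - y₂.1 ≠ 0 := sub_ne_zero.mpr ha2
    have hdδ1 : x.1 - y₁.1 ≠ Ylift q s x.2 - Ylift q s y₁.2 := by
      intro hh
      exact hb1 (by linear_combination hh)
    have hdδ2 : x.1 - y₂.1 ≠ Ylift q s x.2 - Ylift q s y₂.2 := by
      intro hh
      exact hb2 (by linear_combination hh)
    -- evaluate rankB on each side
    have hmain : ∀ y : ZMod q × ZMod s, x.1 ≠ y.1 →
        x.1 - y.1 ≠ Ylift q s x.2 - Ylift q s y.2 →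
        (x.2 = y.2 ∧ ((x.1 + y.1).val = 0 ∧ rankB q s x y = s * (q - 2) ∨
          (x.1 + y.1).val = q - 1 ∧ rankB q s x y = s * (q - 2) + 1 ∨
          (1 ≤ (x.1 + y.1).val ∧ (x.1 + y.1).val ≤ q - 2 ∧
            rankB q s x y = (x.2 + y.2).val * (q - 2) + ((x.1 + y.1).val - 1)))) ∨
        (x.2 ≠ y.2 ∧ rankB q s x y = (x.2 + y.2).val * (q - 2) +
          Jfun q (x.1 - y.1) (Ylift q s x.2 - Ylift q s y.2)) := by
      intro y hxy hne
      by_cases hyy : x.2 = y.2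
      · left
        refine ⟨hyy, ?_⟩
        unfold rankB
        rw [if_pos hyy]
        by_cases hg0 : (x.1 + y.1).val = 0
        · rw [if_pos hg0]; exact Or.inl ⟨hg0, rfl⟩
        · rw [if_neg hg0]
          by_cases hg1 : (x.1 + y.1).val = q - 1
          · rw [if_pos hg1]; exact Or.inr (Or.inl ⟨hg1, rfl⟩)
          · rw [if_neg hg1]
            have := ZMod.val_lt (x.1 + y.1)
            exact Or.inr (Or.inr ⟨by omega, by omega, rfl⟩)
      · right
        refine ⟨hyy, ?_⟩
        unfold rankB
        rw [if_neg hyy]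
    have hδne : ∀ y : ZMod q × ZMod s, x.2 ≠ y.2 →
        Ylift q s x.2 - Ylift q s y.2 ≠ 0 := by
      intro y hyy
      exact sub_ne_zero.mpr (fun hh => hyy (hY _ _ hh))
    -- bound for valid inter rank
    have hinterlt : ∀ y : ZMod q × ZMod s, x.1 ≠ y.1 →
        x.1 - y.1 ≠ Ylift q s x.2 - Ylift q s y.2 → x.2 ≠ y.2 →
        (x.2 + y.2).val * (q - 2) + Jfun q (x.1 - y.1) (Ylift q s x.2 - Ylift q s y.2)
          < s * (q - 2) ∧
        Jfun q (x.1 - y.1) (Ylift q s x.2 - Ylift q s y.2) ≤ q - 3 := by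
      intro y hxy hne hyy
      have hJ := Jfun_le hq2 (x.1 - y.1) _ (sub_ne_zero.mpr hxy) hne (hδne y hyy)
      have hβ : (x.2 + y.2).val ≤ s - 1 := by have := ZMod.val_lt (x.2 + y.2); omega
      constructor
      · calc (x.2 + y.2).val * (q - 2) + Jfun q (x.1 - y.1) _
            ≤ (s - 1) * (q - 2) + (q - 3) := by
              exact Nat.add_le_add (Nat.mul_le_mul_right _ hβ) hJ
          _ < s * (q - 2) := by
            have : (s - 1) * (q - 2) + (q - 2) = s * (q - 2) := by
              calc (s - 1) * (q - 2) + (q - 2) = ((s - 1) + 1) * (q - 2) := by ring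
                _ = s * (q - 2) := by
                  have hse : (s - 1) + 1 = s := by omega
                  rw [hse]
            omega
      · exact hJ
    rcases hmain y₁ ha1 hdδ1 with ⟨hyy1, hcase1⟩ | ⟨hyy1, hval1⟩ <;>
      rcases hmain y₂ ha2 hdδ2 with ⟨hyy2, hcase2⟩ | ⟨hyy2, hval2⟩
    · -- both intra
      rcases hcase1 with ⟨hg1, hv1⟩ | ⟨hg1, hv1⟩ | ⟨hg1a, hg1b, hv1⟩ <;>
        rcases hcase2 with ⟨hg2, hv2⟩ | ⟨hg2, hv2⟩ | ⟨hg2a, hg2b, hv2⟩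
      · -- both γ = 0
        have e1 : y₁.1 = -x.1 := by
          have : x.1 + y₁.1 = 0 := by rwa [← ZMod.val_eq_zero]
          linear_combination this
        have e2 : y₂.1 = -x.1 := by
          have : x.1 + y₂.1 = 0 := by rwa [← ZMod.val_eq_zero]
          linear_combination this
        have : y₁.1 = y₂.1 := by rw [e1, e2]
        exact Prod.ext this (hyy1.symm.trans hyy2)
      · exfalso; omega
      · exfalso
        have hβ : (x.2 + y₂.2).val ≤ s - 1 := by have := ZMod.val_lt (x.2 + y₂.2); omega
        have : (x.2 + y₂.2).val * (q - 2) + ((x.1 + y₂.1).val - 1) < s * (q - 2) := by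
          have h5 : (x.2 + y₂.2).val * (q - 2) + (q - 2) ≤ s * (q - 2) := by
            calc (x.2 + y₂.2).val * (q - 2) + (q - 2)
                = ((x.2 + y₂.2).val + 1) * (q - 2) := by ring
              _ ≤ s * (q - 2) := Nat.mul_le_mul_right _ (by omega)
          omega
        omega
      · exfalso; omega
      · -- both γ = q - 1
        have e0 : x.1 + y₁.1 = x.1 + y₂.1 := ZMod.val_injective q (by omega)
        have : y₁.1 = y₂.1 := by linear_combination e0
        exact Prod.ext this (hyy1.symm.trans hyy2)
      · exfalso
        have hβ : (x.2 + y₂.2).val ≤ s - 1 := by have := ZMod.val_lt (x.2 + y₂.2); omega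
        have h5 : (x.2 + y₂.2).val * (q - 2) + (q - 2) ≤ s * (q - 2) := by
          calc (x.2 + y₂.2).val * (q - 2) + (q - 2)
              = ((x.2 + y₂.2).val + 1) * (q - 2) := by ring
            _ ≤ s * (q - 2) := Nat.mul_le_mul_right _ (by omega)
        omega
      · exfalso
        have hβ : (x.2 + y₁.2).val ≤ s - 1 := by have := ZMod.val_lt (x.2 + y₁.2); omega
        have h5 : (x.2 + y₁.2).val * (q - 2) + (q - 2) ≤ s * (q - 2) := by
          calc (x.2 + y₁.2).val * (q - 2) + (q - 2)
              = ((x.2 + y₁.2).val + 1) * (q - 2) := by ring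
            _ ≤ s * (q - 2) := Nat.mul_le_mul_right _ (by omega)
        omega
      · exfalso
        have hβ : (x.2 + y₁.2).val ≤ s - 1 := by have := ZMod.val_lt (x.2 + y₁.2); omega
        have h5 : (x.2 + y₁.2).val * (q - 2) + (q - 2) ≤ s * (q - 2) := by
          calc (x.2 + y₁.2).val * (q - 2) + (q - 2)
              = ((x.2 + y₁.2).val + 1) * (q - 2) := by ring
            _ ≤ s * (q - 2) := Nat.mul_le_mul_right _ (by omega)
        omega
      · -- both middle intra
        have hemid : (x.2 + y₁.2).val = (x.2 + y₂.2).val ∧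
            (x.1 + y₁.1).val - 1 = (x.1 + y₂.1).val - 1 := by
          apply euclid_unique (show 0 < q - 2 by omega)
          · rw [← hv1, ← hv2, hrk]
          · omega
          · omega
        have e0 : x.1 + y₁.1 = x.1 + y₂.1 := ZMod.val_injective q (by omega)
        have eA : y₁.1 = y₂.1 := by linear_combination e0
        exact Prod.ext eA (hyy1.symm.trans hyy2)
    · -- y₁ intra, y₂ inter : contradiction via rank ranges
      exfalso
      have hlt2 := (hinterlt y₂ ha2 hdδ2 hyy2).1
      rcases hcase1 with ⟨hg1, hv1⟩ | ⟨hg1, hv1⟩ | ⟨hg1a, hg1b, hv1⟩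
      · omega
      · omega
      · -- both < s*(q-2) : euclid forces same β and j, then x.2 = y₂.2 contradiction
        have hemid : (x.2 + y₁.2).val = (x.2 + y₂.2).val ∧
            (x.1 + y₁.1).val - 1 = Jfun q (x.1 - y₂.1) (Ylift q s x.2 - Ylift q s y₂.2) := by
          apply euclid_unique (show 0 < q - 2 by omega)
          · rw [← hv1, ← hval2, hrk]
          · omega
          · have := (hinterlt y₂ ha2 hdδ2 hyy2).2
            omega
        have e0 : x.2 + y₁.2 = x.2 + y₂.2 := ZMod.val_injective s (by omega)
        have : y₁.2 = y₂.2 := by linear_combination e0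
        rw [← hyy1] at this
        exact hyy2 this
    · -- symmetric
      exfalso
      have hlt1 := (hinterlt y₁ ha1 hdδ1 hyy1).1
      rcases hcase2 with ⟨hg2, hv2⟩ | ⟨hg2, hv2⟩ | ⟨hg2a, hg2b, hv2⟩
      · omega
      · omega
      · have hemid : (x.2 + y₁.2).val = (x.2 + y₂.2).val ∧
            Jfun q (x.1 - y₁.1) (Ylift q s x.2 - Ylift q s y₁.2) = (x.1 + y₂.1).val - 1 := by
          apply euclid_unique (show 0 < q - 2 by omega)
          · rw [← hval1, ← hv2, hrk]
          · have := (hinterlt y₁ ha1 hdδ1 hyy1).2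
            omega
          · omega
        have e0 : x.2 + y₁.2 = x.2 + y₂.2 := ZMod.val_injective s (by omega)
        have : y₁.2 = y₂.2 := by linear_combination e0
        rw [← hyy2] at this
        exact hyy1 this.symm
    · -- both inter
      have hJ1 := (hinterlt y₁ ha1 hdδ1 hyy1).2
      have hJ2 := (hinterlt y₂ ha2 hdδ2 hyy2).2
      have hemid : (x.2 + y₁.2).val = (x.2 + y₂.2).val ∧
          Jfun q (x.1 - y₁.1) (Ylift q s x.2 - Ylift q s y₁.2)
            = Jfun q (x.1 - y₂.1) (Ylift q s x.2 - Ylift q s y₂.2) := by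
        apply euclid_unique (show 0 < q - 2 by omega)
        · rw [← hval1, ← hval2, hrk]
        · omega
        · omega
      have e0 : x.2 + y₁.2 = x.2 + y₂.2 := ZMod.val_injective s (by omega)
      have ey2 : y₁.2 = y₂.2 := by linear_combination e0
      have hδeq : Ylift q s x.2 - Ylift q s y₂.2 = Ylift q s x.2 - Ylift q s y₁.2 := by
        rw [ey2]
      have hJeq : Jfun q (x.1 - y₁.1) (Ylift q s x.2 - Ylift q s y₁.2)
          = Jfun q (x.1 - y₂.1) (Ylift q s x.2 - Ylift q s y₁.2) := by
        rw [hemid.2, hδeq]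
      have hd : x.1 - y₁.1 = x.1 - y₂.1 :=
        Jfun_inj hq2 _ _ _ (hδne y₁ hyy1) hd1 hdδ1 hd2 (hδeq ▸ hdδ2) hJeq
      have ey1 : y₁.1 = y₂.1 := by linear_combination -hd
      exact Prod.ext ey1 ey2

/-- If `n ≥ m ≥ 1`, `k ≥ 2`, `n + m + 1` divides `k − 1`, and `n` is even
or `m` is odd, then `r(S(n,m); k) ≥ kn + m + 2`. -/

lemma isRamsey_mono {W : Type} {H : SimpleGraph W} {k N N' : ℕ}
    (h : IsRamsey H k N) (hle : N ≤ N') : IsRamsey H k N' := by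
  intro c
  obtain ⟨f, i, hf⟩ := h (fun e => c (e.map (Fin.castLE hle)))
  refine ⟨f.trans (Fin.castLEEmb hle), i, ?_⟩
  intro v w hadj
  have := hf v w hadj
  simpa [Sym2.map_pair_eq] using this

theorem stmt_5 (n m k : ℕ) (hnm : m ≤ n) (hm : 1 ≤ m) (hk : 2 ≤ k)
    (hdvd : (n + m + 1) ∣ (k - 1)) (hpar : Even n ∨ Odd m) :
    ramseyNumber (doubleStar n m) k ≥ k * n + m + 2 := by
  obtain ⟨t, ht⟩ := hdvd
  have ht1 : 1 ≤ t := by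
    rcases Nat.eq_zero_or_pos t with h0 | h1
    · subst h0; simp at ht; omega
    · exact h1
  have hks : k = t * (n + m + 1) + 1 := by
    have : (n + m + 1) * t = t * (n + m + 1) := by ring
    omega
  have hconstr : ¬ IsRamsey (doubleStar n m) k (k * n + m + 1) := by
    by_cases hne : Even n
    · exact caseA n m t k hm hnm hne ht1 hks
    · rcases Nat.even_or_odd (t * n) with hev | hod
      · have ht2 : 2 ≤ t := by
          rcases Nat.even_or_odd t with ht' | ht'
          · rcases ht' with ⟨u, hu⟩
            omega
          · exfalso
            exact hne (by
              rcases Nat.even_or_odd n with h | h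
              · exact h
              · exact absurd hev (by simp [Nat.even_mul, Nat.odd_iff] at *; omega))
        exact caseB n m t k hm hnm ht2 hev hks
      · exact caseC n m t k hm hnm ht1 hod hks
  by_contra hcon
  push_neg at hcon
  have hmem : ramseyNumber (doubleStar n m) k ∈ {N | IsRamsey (doubleStar n m) k N} :=
    Nat.sInf_mem ⟨_, exists_isRamsey n m k (by omega)⟩
  have hR : IsRamsey (doubleStar n m) k (ramseyNumber (doubleStar n m) k) := hmem
  exact hconstr (isRamsey_mono hR (by omega))
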